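/- Fix 0 < q < 1. On ℓ²(ℕ × ℕ) define a|m,n⟩ = (1-q^{2m})^{1/2} q^{m+2n}|m-1,n⟩, b|m,n⟩ = (1-q^{4n+4})^{1/2} q^{2(m+n+2)}|m,n+1⟩, t|m,n⟩ = q^{2m+4n+4}|m,n⟩. Then q⁴ a* a + q^{-4} b* b = t(1 - t). -/

import Mathlib

noncomputable section

/-- The Hilbert space ℓ²(ℕ × ℕ). -/
abbrev H2 : Type := lp (fun _ : ℕ × ℕ => ℂ) 2

/-- The standard orthonormal basis vector `|m,n⟩` of ℓ²(ℕ × ℕ). -/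
def ket (m n : ℕ) : H2 := lp.single 2 (m, n) (1 : ℂ)

open ContinuousLinearMap

local notation "⟪" x ", " y "⟫" => @inner ℂ _ _ x y

lemma ket_apply (m n : ℕ) (j : ℕ × ℕ) :
    (ket m n : lp (fun _ : ℕ × ℕ => ℂ) 2) j = if j = (m, n) then (1 : ℂ) else 0 := by
  rcases eq_or_ne j (m, n) with h | h
  · subst h; simp [ket, lp.single_apply_self]
  · simp [ket, lp.single_apply_ne _ _ _ h, h]

lemma apply_eq_inner (f : H2) (i : ℕ × ℕ) :
    ⟪(lp.single 2 i (1 : ℂ) : H2), f⟫ = f i := by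
  rw [lp.inner_single_left]
  simp

lemma adj_apply (A : H2 →L[ℂ] H2) (v : H2) (i : ℕ × ℕ) :
    (adjoint A v) i = ⟪A (lp.single 2 i (1 : ℂ)), v⟫ := by
  rw [← apply_eq_inner, adjoint_inner_right]

lemma single_eq_ket (m n : ℕ) : (lp.single 2 (m, n) (1 : ℂ) : H2) = ket m n := rfl

lemma clm_ext_ket {T S : H2 →L[ℂ] H2} (h : ∀ m n : ℕ, T (ket m n) = S (ket m n)) :
    T = S := by
  refine ContinuousLinearMap.ext fun f => ?_
  have hf : HasSum (fun i : ℕ × ℕ => (lp.single 2 i (f i) : H2)) f :=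
    lp.hasSum_single (by norm_num) f
  have key : ∀ i : ℕ × ℕ, T (lp.single 2 i (f i)) = S (lp.single 2 i (f i)) := by
    rintro ⟨m, n⟩
    have h1 : (lp.single 2 (m, n) (f (m, n)) : H2) = f (m, n) • ket m n := by
      rw [ket, ← lp.single_smul]; simp
    rw [h1, map_smul, map_smul, h]
  have hT := hf.mapL T
  have hS := hf.mapL S
  rw [show (fun i : ℕ × ℕ => T (lp.single 2 i (f i))) =
      (fun i : ℕ × ℕ => S (lp.single 2 i (f i))) from funext key] at hT
  exact hT.unique hS

open ContinuousLinearMap in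
/-- In the representation σ: `q⁴ a* a + q⁻⁴ b* b = t(1-t)`. -/
theorem stmt15 (q : ℝ) (hq0 : 0 < q) (hq1 : q < 1)
    (t a b : H2 →L[ℂ] H2)
    (hT : ∀ m n : ℕ, t (ket m n) = ((q ^ (2 * m + 4 * n + 4) : ℝ) : ℂ) • ket m n)
    (ha0 : ∀ n : ℕ, a (ket 0 n) = 0)
    (ha : ∀ m n : ℕ, a (ket (m + 1) n)
        = ((Real.sqrt (1 - q ^ (2 * (m + 1))) * q ^ ((m + 1) + 2 * n) : ℝ) : ℂ) • ket m n)
    (hb : ∀ m n : ℕ, b (ket m n)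
        = ((Real.sqrt (1 - q ^ (4 * n + 4)) * q ^ (2 * (m + n + 2)) : ℝ) : ℂ) • ket m (n + 1)) :
    ((q : ℂ) ^ 4) • (adjoint a * a) + ((q : ℂ) ^ (-4 : ℤ)) • (adjoint b * b)
      = t * (1 - t) := by
  have hqc : (q : ℂ) ≠ 0 := by exact_mod_cast hq0.ne'
  have hsq : ∀ k : ℕ, (0 : ℝ) ≤ 1 - q ^ (k + 1) := fun k => by
    have : q ^ (k + 1) ≤ 1 := pow_le_one₀ hq0.le hq1.le
    linarith
  -- adjoint of a on kets
  have haadj : ∀ m n : ℕ, adjoint a (ket m n)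
      = ((Real.sqrt (1 - q ^ (2 * (m + 1))) * q ^ ((m + 1) + 2 * n) : ℝ) : ℂ) • ket (m + 1) n := by
    intro m n
    refine lp.ext (funext fun j => ?_)
    obtain ⟨p, r⟩ := j
    rw [lp.coeFn_smul, Pi.smul_apply, adj_apply]
    cases p with
    | zero =>
        rw [single_eq_ket, ha0 r]
        have : ((0, r) : ℕ × ℕ) ≠ (m + 1, n) := by simp
        simp [ket_apply, this]
    | succ p =>
        rw [single_eq_ket, ha p r, inner_smul_left, ket, lp.inner_single_left]
        rcases eq_or_ne ((p, r) : ℕ × ℕ) (m, n) with h | h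
        · obtain ⟨rfl, rfl⟩ := Prod.mk.injEq .. ▸ h
          simp [ket_apply, Complex.conj_ofReal]
        · have h2 : ((p + 1, r) : ℕ × ℕ) ≠ (m + 1, n) := by
            simp only [ne_eq, Prod.mk.injEq, not_and] at h ⊢
            intro hp hr
            exact (h (Nat.succ_injective hp) hr).elim
          simp [ket_apply, h, h2]
  -- adjoint of b on kets
  have hbadj : ∀ m n : ℕ, adjoint b (ket m (n + 1))
      = ((Real.sqrt (1 - q ^ (4 * n + 4)) * q ^ (2 * (m + n + 2)) : ℝ) : ℂ) • ket m n := by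
    intro m n
    refine lp.ext (funext fun j => ?_)
    obtain ⟨p, r⟩ := j
    rw [lp.coeFn_smul, Pi.smul_apply, adj_apply, single_eq_ket, hb p r,
      inner_smul_left, ket, lp.inner_single_left]
    rcases eq_or_ne ((p, r) : ℕ × ℕ) (m, n) with h | h
    · obtain ⟨rfl, rfl⟩ := Prod.mk.injEq .. ▸ h
      simp [ket_apply, Complex.conj_ofReal]
    · have h2 : ((p, r + 1) : ℕ × ℕ) ≠ (m, n + 1) := by
        simp only [ne_eq, Prod.mk.injEq, not_and] at h ⊢
        intro hp hr
        exact (h hp (Nat.succ_injective hr)).elim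
      simp [ket_apply, h, h2]
  refine clm_ext_ket fun m n => ?_
  have hRHS : (t * (1 - t)) (ket m n)
      = (((q ^ (2 * m + 4 * n + 4) : ℝ) : ℂ) * (1 - ((q ^ (2 * m + 4 * n + 4) : ℝ) : ℂ)))
        • ket m n := by
    simp only [ContinuousLinearMap.mul_apply, ContinuousLinearMap.sub_apply, ContinuousLinearMap.one_apply, map_sub, hT, map_smul, smul_smul]
    rw [mul_one_sub, sub_smul]
  rw [ContinuousLinearMap.add_apply, ContinuousLinearMap.smul_apply, ContinuousLinearMap.smul_apply, ContinuousLinearMap.mul_apply, ContinuousLinearMap.mul_apply, hRHS]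
  rw [hb m n, map_smul, hbadj m n]
  cases m with
  | zero =>
      rw [ha0 n, map_zero, smul_zero, zero_add, smul_smul, smul_smul]
      congr 1
      have hs : Real.sqrt (1 - q ^ (4 * n + 4)) * Real.sqrt (1 - q ^ (4 * n + 4))
          = 1 - q ^ (4 * n + 4) := Real.mul_self_sqrt (by simpa using hsq (4 * n + 3))
      rw [show ((q : ℂ) ^ (-4 : ℤ)) = ((q ^ (-4 : ℤ) : ℝ) : ℂ) by push_cast; ring]
      norm_cast
      rw [zpow_negSucc]
      field_simp
      linear_combination (q ^ (4 * n + 8)) * hs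
  | succ m =>
      rw [ha m n, map_smul, haadj m n, smul_smul, smul_smul, smul_smul, smul_smul, ← add_smul]
      congr 1
      have hsa : Real.sqrt (1 - q ^ (2 * (m + 1))) * Real.sqrt (1 - q ^ (2 * (m + 1)))
          = 1 - q ^ (2 * (m + 1)) := Real.mul_self_sqrt (by have h := hsq (2 * m + 1); rwa [show 2 * m + 1 + 1 = 2 * (m + 1) by ring] at h)
      have hsb : Real.sqrt (1 - q ^ (4 * n + 4)) * Real.sqrt (1 - q ^ (4 * n + 4))
          = 1 - q ^ (4 * n + 4) := Real.mul_self_sqrt (by simpa using hsq (4 * n + 3))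
      rw [show ((q : ℂ) ^ (-4 : ℤ)) = ((q ^ (-4 : ℤ) : ℝ) : ℂ) by push_cast; ring]
      norm_cast
      rw [zpow_negSucc]
      field_simp
      linear_combination (q ^ (2 * m + 4 * n + 10)) * hsa + (q ^ (4 * m + 4 * n + 12)) * hsb
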